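/- Let p, q be relatively prime positive integers, {F_n} the (p,q)-Fibonacci sequence, and let h, a, d be positive integers. Set d_1 = F_a and d_i = F_{h·a + (i−1)·d} for i ≥ 2. If 2d divides a and d_3 does not belong to the semigroup ℕd_1 + ℕd_2, then d_4 does not belong to the semigroup ℕd_1 + ℕd_2 + ℕd_3. -/
import Mathlib


open MvPolynomial

/-- The `(p,q)`-Fibonacci sequence: `F 0 = 0`, `F 1 = 1`, `F (n+2) = p * F (n+1) + q * F n`. -/
def pqFib (p q : ℕ) : ℕ → ℕ
  | 0 => 0
  | 1 => 1
  | n + 2 => p * pqFib p q (n + 1) + q * pqFib p q n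

/-- The `(p,q)`-Lucas sequence: `L 0 = 2`, `L 1 = p`, `L (n+2) = p * L (n+1) + q * L n`. -/
def pqLucas (p q : ℕ) : ℕ → ℕ
  | 0 => 2
  | 1 => p
  | n + 2 => p * pqLucas p q (n + 1) + q * pqLucas p q n

/-- The toric ideal of the affine monomial curve `t ↦ (t^{d 0}, …, t^{d (n-1)})`:
the kernel of the `k`-algebra map `k[x_1,…,x_n] → k[t]`, `x_i ↦ t^{d i}`. -/
noncomputable def toricIdeal (k : Type*) [Field k] {n : ℕ} (d : Fin n → ℕ) :
    Ideal (MvPolynomial (Fin n) k) :=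
  RingHom.ker (MvPolynomial.aeval
    (fun i : Fin n => (Polynomial.X : Polynomial k) ^ d i)).toRingHom

/-- The toric ideal `I_A` is a complete intersection iff it can be generated by
`n - 1` elements. -/
def IsCI (k : Type*) [Field k] {n : ℕ} (d : Fin n → ℕ) : Prop :=
  ∃ g : Fin (n - 1) → MvPolynomial (Fin n) k,
    Ideal.span (Set.range g) = toricIdeal k d

/-- The toric ideal of the projective monomial curve: the kernel of the `k`-algebra map
`k[x_1,…,x_{n+1}] → k[t,u]`, `x_i ↦ t^{d i} u^{D - d i}` for `i ≤ n` and
`x_{n+1} ↦ u^D`, where `D = max A`. -/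
noncomputable def projToricIdeal (k : Type*) [Field k] {n : ℕ} (d : Fin n → ℕ) :
    Ideal (MvPolynomial (Fin (n + 1)) k) :=
  RingHom.ker (MvPolynomial.aeval (fun i : Fin (n + 1) =>
    if h : (i : ℕ) < n then
      (X 0 : MvPolynomial (Fin 2) k) ^ d ⟨i, h⟩ *
        (X 1 : MvPolynomial (Fin 2) k) ^ (Finset.univ.sup d - d ⟨i, h⟩)
    else (X 1 : MvPolynomial (Fin 2) k) ^ (Finset.univ.sup d))).toRingHom

/-- The projective toric ideal `I_{A*}` is a complete intersection iff it can be
generated by `n - 1` elements. -/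
def ProjIsCI (k : Type*) [Field k] {n : ℕ} (d : Fin n → ℕ) : Prop :=
  ∃ g : Fin (n - 1) → MvPolynomial (Fin (n + 1)) k,
    Ideal.span (Set.range g) = projToricIdeal k d

/-- `d 0 < d 1 < ⋯` is a generalized arithmetic sequence: there are positive
integers `h, e` with `d i = h * d 0 + i * e` for every `i ≥ 1`. -/
def IsGenArith {n : ℕ} (d : Fin n → ℕ) : Prop :=
  ∃ h e : ℕ, 0 < h ∧ 0 < e ∧
    ∀ i : Fin n, 0 < (i : ℕ) → d i = h * d ⟨0, i.pos⟩ + (i : ℕ) * e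

/-- `d 0 < d 1 < ⋯` is an increasing arithmetic sequence: there is a positive
integer `e` with `d i = d 0 + i * e` for every `i`. -/
def IsArithFn {n : ℕ} (d : Fin n → ℕ) : Prop :=
  ∃ e : ℕ, 0 < e ∧ ∀ i : Fin n, 0 < (i : ℕ) → d i = d ⟨0, i.pos⟩ + (i : ℕ) * e

/-- `A = {d 0, …, d (n-1)}` minimally generates the numerical semigroup
`ℕ d 0 + ⋯ + ℕ d (n-1)`: no `d i` lies in the subsemigroup generated by the rest. -/
def MinimallyGenerates {n : ℕ} (d : Fin n → ℕ) : Prop :=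
  ∀ i : Fin n, ¬ ∃ α : Fin n → ℕ, α i = 0 ∧ d i = ∑ j, α j * d j


section pqLemmas
variable (p q : ℕ)

lemma pqFib_zero : pqFib p q 0 = 0 := rfl
lemma pqFib_one : pqFib p q 1 = 1 := rfl
lemma pqFib_add_two (n : ℕ) :
    pqFib p q (n + 2) = p * pqFib p q (n + 1) + q * pqFib p q n := rfl
lemma pqLucas_add_two (n : ℕ) :
    pqLucas p q (n + 2) = p * pqLucas p q (n + 1) + q * pqLucas p q n := rfl

lemma pqFib_pos (hp : 0 < p) : ∀ n, 0 < pqFib p q (n + 1)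
  | 0 => Nat.one_pos
  | n + 1 => by
    rw [pqFib_add_two]
    exact Nat.lt_of_lt_of_le (Nat.mul_pos hp (pqFib_pos hp n)) (Nat.le_add_right _ _)

lemma pqFib_mono (hp : 0 < p) : Monotone (pqFib p q) := by
  apply monotone_nat_of_le_succ
  intro n
  cases n with
  | zero => simp [pqFib]
  | succ n =>
    rw [pqFib_add_two]
    calc pqFib p q (n+1) = 1 * pqFib p q (n+1) := (one_mul _).symm
    _ ≤ p * pqFib p q (n+1) := Nat.mul_le_mul_right _ hp
    _ ≤ _ := Nat.le_add_right _ _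

lemma pqLucas_pos (hp : 0 < p) : ∀ n, 0 < pqLucas p q n
  | 0 => by norm_num [pqLucas]
  | 1 => hp
  | n + 2 => by
    rw [pqLucas_add_two]
    exact Nat.lt_of_lt_of_le (Nat.mul_pos hp (pqLucas_pos hp (n+1))) (Nat.le_add_right _ _)

lemma pqLucas_lt_succ (hp : 0 < p) (hq : 0 < q) (n : ℕ) :
    pqLucas p q (n + 1) < pqLucas p q (n + 2) := by
  rw [pqLucas_add_two]
  calc pqLucas p q (n+1) = 1 * pqLucas p q (n+1) + 0 := by ring
  _ < p * pqLucas p q (n+1) + q * pqLucas p q n :=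
    Nat.add_lt_add_of_le_of_lt (Nat.mul_le_mul_right _ hp)
      (Nat.mul_pos hq (pqLucas_pos p q hp n))

lemma pqLucas_strict (hp : 0 < p) (hq : 0 < q) {m n : ℕ} (hm : 1 ≤ m) (hmn : m < n) :
    pqLucas p q m < pqLucas p q n := by
  induction n with
  | zero => omega
  | succ n ih =>
    rcases Nat.lt_or_ge m n with h' | h'
    · have hn : 1 ≤ n := by omega
      refine lt_trans (ih h') ?_
      obtain ⟨n', rfl⟩ : ∃ n', n = n' + 1 := ⟨n - 1, by omega⟩
      exact pqLucas_lt_succ p q hp hq n'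
    · have : m = n := by omega
      subst this
      obtain ⟨n', rfl⟩ : ∃ n', m = n' + 1 := ⟨m - 1, by omega⟩
      exact pqLucas_lt_succ p q hp hq n'

lemma pqFib_add (m n : ℕ) :
    pqFib p q (m + n + 1) =
      pqFib p q (m + 1) * pqFib p q (n + 1) + q * pqFib p q m * pqFib p q n := by
  induction m using Nat.twoStepInduction generalizing n with
  | zero => simp [pqFib]
  | one =>
    rw [show 1 + n + 1 = n + 2 from by ring, pqFib_add_two]
    simp [pqFib]
  | more m ih1 ih2 =>
    rw [show m + 2 + n + 1 = (m + n + 1) + 2 from by ring, pqFib_add_two, ih1,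
      show m + n + 1 + 1 = (m + 1) + n + 1 from by ring, ih2,
      show m + 2 + 1 = (m + 1) + 2 from by ring, pqFib_add_two p q (m+1),
      pqFib_add_two p q m]
    ring

lemma pqFib_dvd_mul (m k : ℕ) : pqFib p q m ∣ pqFib p q (m * k) := by
  induction k with
  | zero => simp [pqFib]
  | succ k ih =>
    rcases Nat.eq_zero_or_pos m with hm | hm
    · simp [hm, pqFib]
    · rw [Nat.mul_succ, show m * k + m = m * k + (m - 1) + 1 from by omega, pqFib_add,
        show m - 1 + 1 = m from by omega]
      exact Nat.dvd_add (Dvd.dvd.mul_left dvd_rfl _) ((ih.mul_left q).mul_right _)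

lemma pqFib_dvd {m n : ℕ} (hmn : m ∣ n) : pqFib p q m ∣ pqFib p q n := by
  obtain ⟨k, rfl⟩ := hmn
  exact pqFib_dvd_mul p q m k

lemma pqFib_coprime_q (hpq : Nat.Coprime p q) : ∀ n, Nat.Coprime (pqFib p q (n + 1)) q := by
  intro n
  induction n using Nat.twoStepInduction with
  | zero => simp [pqFib]
  | one =>
    have : pqFib p q 2 = p := by simp [pqFib]
    rw [this]; exact hpq
  | more n ih1 ih2 =>
    rw [show n + 2 + 1 = (n + 1) + 2 from by ring, pqFib_add_two]
    exact (Nat.coprime_add_mul_left_left _ _ _).mpr (Nat.Coprime.mul hpq ih2)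

lemma pqFib_coprime_succ (hpq : Nat.Coprime p q) : ∀ n, Nat.Coprime (pqFib p q n) (pqFib p q (n + 1)) := by
  intro n
  induction n with
  | zero => simp [pqFib]
  | succ n ih =>
    rw [show n + 1 + 1 = n + 2 from rfl, pqFib_add_two,
      show p * pqFib p q (n + 1) + q * pqFib p q n
        = q * pqFib p q n + pqFib p q (n + 1) * p from by ring]
    exact (Nat.coprime_add_mul_left_right _ _ _).mpr
      (Nat.Coprime.mul_right (pqFib_coprime_q p q hpq n) ih.symm)

lemma pqGcd_fib_add_self (hpq : Nat.Coprime p q) (m n : ℕ) :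
    Nat.gcd (pqFib p q m) (pqFib p q (n + m)) = Nat.gcd (pqFib p q m) (pqFib p q n) := by
  cases m with
  | zero => simp
  | succ m =>
    rw [show n + (m + 1) = n + m + 1 from rfl, pqFib_add,
      show pqFib p q (n + 1) * pqFib p q (m + 1) + q * pqFib p q n * pqFib p q m
        = q * pqFib p q m * pqFib p q n + pqFib p q (n + 1) * pqFib p q (m + 1) from by ring,
      Nat.gcd_add_mul_right_right,
      show q * pqFib p q m * pqFib p q n = pqFib p q n * (q * pqFib p q m) from by ring]
    exact Nat.Coprime.gcd_mul_right_cancel_right _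
      (Nat.Coprime.mul_right (pqFib_coprime_q p q hpq m)
        (pqFib_coprime_succ p q hpq m).symm).symm

lemma pqGcd_fib_add_mul_self (hpq : Nat.Coprime p q) (m n : ℕ) :
    ∀ k, Nat.gcd (pqFib p q m) (pqFib p q (n + k * m)) = Nat.gcd (pqFib p q m) (pqFib p q n)
  | 0 => by simp
  | k + 1 => by
    rw [← pqGcd_fib_add_mul_self hpq m n k, add_mul, ← add_assoc, one_mul,
      pqGcd_fib_add_self p q hpq _ _]

lemma pqFib_gcd (hpq : Nat.Coprime p q) (m n : ℕ) :
    pqFib p q (Nat.gcd m n) = Nat.gcd (pqFib p q m) (pqFib p q n) := by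
  induction m, n using Nat.gcd.induction with
  | H0 n => simp [pqFib_zero]
  | H1 m n _ ih =>
    rw [← Nat.gcd_rec m n] at ih
    conv_rhs => rw [← Nat.mod_add_div' n m]
    rwa [pqGcd_fib_add_mul_self p q hpq m (n % m) (n / m), Nat.gcd_comm (pqFib p q m) _]

lemma pqFib_add_two_int (n : ℕ) :
    (pqFib p q (n + 2) : ℤ) = p * pqFib p q (n + 1) + q * pqFib p q n := by
  exact_mod_cast congrArg (Nat.cast (R := ℤ)) (pqFib_add_two p q n)

lemma pqLucas_add_two_int (n : ℕ) :
    (pqLucas p q (n + 2) : ℤ) = p * pqLucas p q (n + 1) + q * pqLucas p q n := by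
  exact_mod_cast congrArg (Nat.cast (R := ℤ)) (pqLucas_add_two p q n)

lemma pqFib_lucas_int (d : ℕ) : ∀ n : ℕ,
    (pqFib p q (n + 2 * d) : ℤ) + (-(q : ℤ)) ^ d * pqFib p q n
      = (pqLucas p q d : ℤ) * pqFib p q (n + d) := by
  induction d using Nat.twoStepInduction with
  | zero => intro n; simp [pqLucas]; ring
  | one =>
    intro n
    rw [show n + 2 * 1 = n + 2 from by ring, pqFib_add_two_int]
    simp [pqLucas]
  | more d ih1 ih2 =>
    intro n
    have e1 := ih2 (n + 1)
    have e2 := ih1 (n + 2)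
    rw [show n + 1 + 2 * (d + 1) = n + 2 * d + 3 from by ring,
      show n + 1 + (d + 1) = n + d + 2 from by ring] at e1
    rw [show n + 2 + 2 * d = n + 2 * d + 2 from by ring,
      show n + 2 + d = n + d + 2 from by ring] at e2
    rw [show n + 2 * (d + 2) = (n + 2 * d + 2) + 2 from by ring, pqFib_add_two_int,
      show n + 2 * d + 2 + 1 = n + 2 * d + 3 from rfl,
      show n + (d + 2) = n + d + 2 from by ring,
      pqLucas_add_two_int]
    have e3 : (pqFib p q (n + 2) : ℤ) = p * pqFib p q (n + 1) + q * pqFib p q n :=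
      pqFib_add_two_int p q n
    linear_combination (p : ℤ) * e1 + (q : ℤ) * e2 - (-(q:ℤ))^d * q * e3

lemma pqFib_lucas_even {d : ℕ} (hd : Even d) (n : ℕ) :
    pqFib p q (n + 2 * d) + q ^ d * pqFib p q n = pqLucas p q d * pqFib p q (n + d) := by
  have h := pqFib_lucas_int p q d n
  rw [hd.neg_pow] at h
  exact_mod_cast h

lemma pqFib_lucas_odd {d : ℕ} (hd : Odd d) (n : ℕ) :
    pqFib p q (n + 2 * d) = pqLucas p q d * pqFib p q (n + d) + q ^ d * pqFib p q n := by
  have h := pqFib_lucas_int p q d n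
  rw [hd.neg_pow] at h
  have h2 : (pqFib p q (n + 2 * d) : ℤ)
      = (pqLucas p q d : ℤ) * pqFib p q (n + d) + (q : ℤ) ^ d * pqFib p q n := by
    linarith [h]
  exact_mod_cast h2

lemma pqFib_two_mul (m : ℕ) : pqFib p q (2 * m) = pqLucas p q m * pqFib p q m := by
  have h := pqFib_lucas_int p q m 0
  simp [pqFib_zero] at h
  exact_mod_cast h

set_option maxHeartbeats 1000000 in
/-- With `d₁ = F_a`, `d_i = F_{h·a + (i−1)·d}` for `i ≥ 2` in the
`(p,q)`-Fibonacci sequence, if `2d ∣ a` and `d₃ ∉ ℕd₁ + ℕd₂`, then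
`d₄ ∉ ℕd₁ + ℕd₂ + ℕd₃`. -/
theorem stmt15 (p q : ℕ) (hp : 0 < p) (hq : 0 < q) (hpq : Nat.gcd p q = 1)
    (h a d : ℕ) (hh : 0 < h) (ha : 0 < a) (hd : 0 < d)
    (D : ℕ → ℕ) (hD1 : D 1 = pqFib p q a)
    (hDi : ∀ i, 2 ≤ i → D i = pqFib p q (h * a + (i - 1) * d))
    (hdiv : 2 * d ∣ a)
    (hd3 : ¬ ∃ α β : ℕ, D 3 = α * D 1 + β * D 2) :
    ¬ ∃ α β γ : ℕ, D 4 = α * D 1 + β * D 2 + γ * D 3 := by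
  rintro ⟨α, β, γ, hrep⟩
  have hpq' : Nat.Coprime p q := hpq
  obtain ⟨k, hk⟩ := hdiv
  have hk1 : 1 ≤ k := by
    rcases Nat.eq_zero_or_pos k with rfl | h'
    · omega
    · exact h'
  have hD2 : D 2 = pqFib p q (h * a + d) := by
    have := hDi 2 (by norm_num); simpa using this
  have hD3 : D 3 = pqFib p q (h * a + 2 * d) := by
    have := hDi 3 (by norm_num); simpa using this
  have hD4 : D 4 = pqFib p q (h * a + 3 * d) := by
    have := hDi 4 (by norm_num); simpa using this
  obtain ⟨m, hm⟩ : 2 * d ∣ h * a := ⟨h * k, by rw [hk]; ring⟩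
  -- positivity facts
  have hF2dpos : 0 < pqFib p q (2 * d) := by
    have := pqFib_pos p q hp (2 * d - 1)
    rwa [show 2 * d - 1 + 1 = 2 * d from by omega] at this
  have hFdpos : 0 < pqFib p q d := by
    have := pqFib_pos p q hp (d - 1)
    rwa [show d - 1 + 1 = d from by omega] at this
  have hhapos : 0 < h * a := Nat.mul_pos hh ha
  have hD1pos : 0 < D 1 := by
    rw [hD1]
    have := pqFib_pos p q hp (a - 1)
    rwa [show a - 1 + 1 = a from by omega] at this
  have hD2pos : 0 < D 2 := by
    rw [hD2]
    have := pqFib_pos p q hp (h * a + d - 1)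
    rwa [show h * a + d - 1 + 1 = h * a + d from by omega] at this
  have hD3pos : 0 < D 3 := by
    rw [hD3]
    have := pqFib_pos p q hp (h * a + 2 * d - 1)
    rwa [show h * a + 2 * d - 1 + 1 = h * a + 2 * d from by omega] at this
  rcases Nat.lt_or_ge k 2 with hk2 | hk2
  · -- k = 1, so a = 2*d and D 1 ∣ D 3
    have ha2d : a = 2 * d := by
      have : k = 1 := by omega
      subst this; omega
    obtain ⟨c, hc⟩ : pqFib p q a ∣ pqFib p q (h * a + 2 * d) := by
      apply pqFib_dvd
      rw [ha2d]
      exact ⟨h + 1, by ring⟩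
    exact hd3 ⟨c, 0, by rw [hD3, hD1, hc]; ring⟩
  rcases Nat.even_or_odd d with hev | hod
  swap
  · -- d odd : D 3 ∈ ⟨D 1, D 2⟩
    obtain ⟨w, hw⟩ : pqFib p q a ∣ pqFib p q (h * a) := pqFib_dvd p q (dvd_mul_left a h)
    refine hd3 ⟨q ^ d * w, pqLucas p q d, ?_⟩
    rw [hD3, hD2, hD1, pqFib_lucas_odd p q hod (h * a), hw]
    ring
  -- main case : d even, k ≥ 2
  have ha4 : 4 * d ≤ a := by
    have := Nat.mul_le_mul_left (2 * d) hk2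
    omega
  have hqd1 : 1 ≤ q ^ d := Nat.one_le_pow _ _ hq
  have hLdpos : 0 < pqLucas p q d := pqLucas_pos p q hp d
  have hE1 : D 3 + q ^ d * pqFib p q (h * a) = pqLucas p q d * D 2 := by
    rw [hD3, hD2]; exact pqFib_lucas_even p q hev (h * a)
  have hE2 : D 4 + q ^ d * D 2 = pqLucas p q d * D 3 := by
    rw [hD4, hD2, hD3]
    have := pqFib_lucas_even p q hev (h * a + d)
    rwa [show h * a + d + 2 * d = h * a + 3 * d from by ring,
      show h * a + d + d = h * a + 2 * d from by ring] at this
  rw [hrep] at hE2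
  -- γ < L d
  have hγ : γ < pqLucas p q d := by
    by_contra hγ'
    push_neg at hγ'
    have h1 : pqLucas p q d * D 3 ≤ γ * D 3 := Nat.mul_le_mul_right _ hγ'
    have h2 : 0 < q ^ d * D 2 := Nat.mul_pos (by omega) hD2pos
    omega
  set c := pqLucas p q d - γ with hcdef
  have hc : γ + c = pqLucas p q d := by omega
  have hceq : c * D 3 = α * D 1 + (β + q ^ d) * D 2 := by
    have h1 : (γ + c) * D 3 = pqLucas p q d * D 3 := by rw [hc]
    rw [add_mul] at h1
    have hsplit : (β + q ^ d) * D 2 = β * D 2 + q ^ d * D 2 := by ring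
    omega
  -- divisibility by F (2d)
  have hF2dD1 : pqFib p q (2 * d) ∣ D 1 := by rw [hD1]; exact pqFib_dvd p q ⟨k, hk⟩
  have hF2dD3 : pqFib p q (2 * d) ∣ D 3 := by
    rw [hD3]; exact pqFib_dvd p q ⟨m + 1, by rw [show h * a + 2 * d = 2 * d * m + 2 * d from by omega]; ring⟩
  have hF2dB : pqFib p q (2 * d) ∣ (β + q ^ d) * D 2 := by
    have h1 : (β + q ^ d) * D 2 = c * D 3 - α * D 1 := Nat.eq_sub_of_add_eq' hceq.symm
    rw [h1]
    exact Nat.dvd_sub (hF2dD3.mul_left c) (hF2dD1.mul_left α)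
  -- gcd (F (2d)) (D 2) = F d
  have hgcd2 : Nat.gcd (pqFib p q (2 * d)) (D 2) = pqFib p q d := by
    rw [hD2, ← pqFib_gcd p q hpq']
    congr 1
    rw [show h * a + d = d * (2 * m + 1) from by rw [hm]; ring, show 2 * d = d * 2 from by ring,
      Nat.gcd_mul_left]
    have h2 : Nat.gcd 2 (2 * m + 1) = 1 := by
      rw [Nat.gcd_rec, show (2 * m + 1) % 2 = 1 from by omega]
      simp
    rw [h2, mul_one]
  obtain ⟨u2, hu2⟩ : pqFib p q d ∣ D 2 := by
    rw [hD2]; exact pqFib_dvd p q ⟨2 * m + 1, by rw [hm]; ring⟩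
  have hcopLu2 : Nat.Coprime (pqLucas p q d) u2 := by
    have h1 : pqFib p q d * Nat.gcd (pqLucas p q d) u2 = pqFib p q d * 1 := by
      rw [← Nat.gcd_mul_left, mul_one, ← hu2, ← mul_comm (pqLucas p q d) (pqFib p q d),
        ← pqFib_two_mul, hgcd2]
    exact Nat.eq_of_mul_eq_mul_left hFdpos h1
  have hLβ : pqLucas p q d ∣ β + q ^ d := by
    apply Nat.Coprime.dvd_of_dvd_mul_right hcopLu2
    have h1 : pqFib p q d * pqLucas p q d ∣ pqFib p q d * ((β + q ^ d) * u2) := by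
      rw [show pqFib p q d * pqLucas p q d = pqLucas p q d * pqFib p q d from mul_comm _ _,
        show pqFib p q d * ((β + q ^ d) * u2) = (β + q ^ d) * (pqFib p q d * u2) from by ring,
        ← hu2, ← pqFib_two_mul]
      exact hF2dB
    exact (Nat.mul_dvd_mul_iff_left hFdpos).mp h1
  obtain ⟨b, hb⟩ := hLβ
  have hb1 : 1 ≤ b := by
    rcases Nat.eq_zero_or_pos b with rfl | h'
    · omega
    · exact h'
  -- the star identity
  obtain ⟨w, hw⟩ : pqFib p q a ∣ pqFib p q (h * a) := pqFib_dvd p q (dvd_mul_left a h)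
  have hw1 : 1 ≤ w := by
    rcases Nat.eq_zero_or_pos w with rfl | h'
    · exfalso
      have hpos : 0 < pqFib p q (h * a) := by
        have := pqFib_pos p q hp (h * a - 1)
        rwa [show h * a - 1 + 1 = h * a from by omega] at this
      rw [hw] at hpos; simp at hpos
    · exact h'
  have hstar : D 3 + q ^ d * w * D 1 = pqLucas p q d * D 2 := by
    rw [hD1, show q ^ d * w * pqFib p q a = q ^ d * (pqFib p q a * w) from by ring, ← hw]
    exact hE1
  have key2 : c * D 3 = α * D 1 + b * D 3 + b * (q ^ d * w) * D 1 := by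
    calc c * D 3 = α * D 1 + (pqLucas p q d * b) * D 2 := by rw [hceq, hb]
    _ = α * D 1 + b * (pqLucas p q d * D 2) := by ring
    _ = α * D 1 + b * (D 3 + q ^ d * w * D 1) := by rw [← hstar]
    _ = _ := by ring
  have hbc : b < c := by
    by_contra hbc'
    push_neg at hbc'
    have h1 : c * D 3 ≤ b * D 3 := Nat.mul_le_mul_right _ hbc'
    have h2 : 0 < b * (q ^ d * w) * D 1 := by positivity
    omega
  set t := c - b with htdef
  have ht : b + t = c := by omega
  have ht1 : 1 ≤ t := by omega
  have hteq : t * D 3 = (α + b * (q ^ d * w)) * D 1 := by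
    have h1 : (b + t) * D 3 = c * D 3 := by rw [ht]
    rw [add_mul] at h1
    have hsplit : (α + b * (q ^ d * w)) * D 1 = α * D 1 + b * (q ^ d * w) * D 1 := by ring
    omega
  -- pass to v1, v3
  obtain ⟨v1, hv1⟩ := hF2dD1
  obtain ⟨v3, hv3⟩ := hF2dD3
  have hgcd13 : Nat.gcd (D 1) (D 3) = pqFib p q (2 * d) := by
    rw [hD1, hD3, ← pqFib_gcd p q hpq']
    congr 1
    have hmhk : m = h * k := by
      have h1 : 2 * d * m = 2 * d * (h * k) := by rw [← hm, hk]; ring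
      exact Nat.eq_of_mul_eq_mul_left (by omega) h1
    rw [show h * a + 2 * d = 2 * d * (h * k + 1) from by rw [hm, hmhk]; ring, hk,
      Nat.gcd_mul_left]
    have h2 : Nat.Coprime k (h * k + 1) := by
      rw [show h * k + 1 = 1 + k * h from by ring]
      exact (Nat.coprime_add_mul_left_right k 1 h).mpr (Nat.coprime_one_right k)
    rw [h2, mul_one]
  have hcopv : Nat.Coprime v1 v3 := by
    have h1 : pqFib p q (2 * d) * Nat.gcd v1 v3 = pqFib p q (2 * d) * 1 := by
      rw [← Nat.gcd_mul_left, mul_one, ← hv1, ← hv3, hgcd13]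
    exact Nat.eq_of_mul_eq_mul_left hF2dpos h1
  have h6 : t * v3 = (α + b * (q ^ d * w)) * v1 := by
    apply Nat.eq_of_mul_eq_mul_left hF2dpos
    rw [show pqFib p q (2 * d) * (t * v3) = t * (pqFib p q (2 * d) * v3) from by ring,
      show pqFib p q (2 * d) * ((α + b * (q ^ d * w)) * v1)
        = (α + b * (q ^ d * w)) * (pqFib p q (2 * d) * v1) from by ring,
      ← hv1, ← hv3]
    exact hteq
  have hv1t : v1 ∣ t := by
    apply Nat.Coprime.dvd_of_dvd_mul_right hcopv
    exact ⟨α + b * (q ^ d * w), by rw [h6]; ring⟩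
  have hv1le : v1 ≤ t := Nat.le_of_dvd (by omega) hv1t
  -- lower bound on v1
  have hFa4 : pqFib p q (4 * d) ≤ pqFib p q a := pqFib_mono p q hp ha4
  have h4d : pqFib p q (4 * d) = pqLucas p q (2 * d) * pqFib p q (2 * d) := by
    rw [show 4 * d = 2 * (2 * d) from by ring]; exact pqFib_two_mul p q (2 * d)
  have hv1ge : pqLucas p q (2 * d) ≤ v1 := by
    have h1 : pqFib p q (2 * d) * pqLucas p q (2 * d) ≤ pqFib p q (2 * d) * v1 := by
      rw [mul_comm (pqFib p q (2 * d)) (pqLucas p q (2 * d)), ← h4d]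
      calc pqFib p q (4 * d) ≤ pqFib p q a := hFa4
      _ = pqFib p q (2 * d) * v1 := by rw [← hD1, hv1]
    exact Nat.le_of_mul_le_mul_left h1 hF2dpos
  have hLlt : pqLucas p q d < pqLucas p q (2 * d) := by
    apply pqLucas_strict p q hp hq (by omega) (by omega)
  omega
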